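/- arXiv:2406.12193 — 2 statements merged into one kernel-verified Lean document; each statement's English description precedes it below -/
import Mathlib

section
/- Let x ∈ ℝⁿ with components sorted so that m₁ ≤ ... ≤ mₙ, and let α = (k·m_{k+1} - ∑_{j=1}^{k} m_j)/2 > 0. Then the vector s with s_j = max(ψ - m_j/(2α), 0) where ψ = 1/k + (∑_{j=1}^{k} m_j)/(2kα), satisfies s_k > 0 (when m_k < m_{k+1}) and s_{k+1} = 0, and ∑_j s_j = 1. -/
theorem stmt_3 (n k : ℕ) (m : ℕ → ℝ) (hm : Monotone m)
    (hk1 : 1 ≤ k) (hk : k < n)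
    (α : ℝ)
    (hα : α = ((k : ℝ) * m (k + 1) - ∑ j ∈ Finset.Icc 1 k, m j) / 2)
    (hαpos : 0 < α)
    (ψ : ℝ)
    (hψ : ψ = 1 / (k : ℝ) + (∑ j ∈ Finset.Icc 1 k, m j) / (2 * (k : ℝ) * α))
    (s : ℕ → ℝ)
    (hs : ∀ j, s j = max (ψ - m j / (2 * α)) 0) :
    (m k < m (k + 1) → 0 < s k) ∧ s (k + 1) = 0 ∧
      ∑ j ∈ Finset.Icc 1 n, s j = 1 := by
  set S := ∑ j ∈ Finset.Icc 1 k, m j with hS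
  have hk0 : (k : ℝ) ≠ 0 := by positivity
  have hα0 : α ≠ 0 := ne_of_gt hαpos
  have h2α : 2 * α = (k : ℝ) * m (k + 1) - S := by rw [hα]; ring
  have hψ2 : ψ = m (k + 1) / (2 * α) := by
    rw [hψ]
    field_simp
    linear_combination h2α
  have hsj : ∀ j, s j = max ((m (k + 1) - m j) / (2 * α)) 0 := by
    intro j
    rw [hs j, hψ2]
    ring_nf
  refine ⟨?_, ?_, ?_⟩
  · intro hlt
    rw [hsj k]
    have : 0 < (m (k + 1) - m k) / (2 * α) := div_pos (by linarith) (by linarith)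
    exact lt_max_of_lt_left this
  · rw [hsj (k + 1)]; simp
  · have hsplit : Finset.Icc 1 n = Finset.Ioc 0 k ∪ Finset.Ioc k n := by
      rw [Finset.Ioc_union_Ioc_eq_Ioc (Nat.zero_le k) (le_of_lt hk)]
      rfl
    rw [hsplit, Finset.sum_union (by
      simp [Finset.disjoint_left]
      intro a h1 h2; omega)]
    have h1 : ∑ j ∈ Finset.Ioc 0 k, s j = ∑ j ∈ Finset.Ioc 0 k, (m (k + 1) - m j) / (2 * α) := by
      apply Finset.sum_congr rfl
      intro j hj
      rw [hsj j]
      have hjk : j ≤ k := (Finset.mem_Ioc.mp hj).2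
      have : m j ≤ m (k + 1) := hm (by omega)
      rw [max_eq_left (div_nonneg (by linarith) (by linarith))]
    have h2 : ∑ j ∈ Finset.Ioc k n, s j = 0 := by
      apply Finset.sum_eq_zero
      intro j hj
      rw [hsj j]
      have : m (k + 1) ≤ m j := hm (Finset.mem_Ioc.mp hj).1
      rw [max_eq_right]
      apply div_nonpos_of_nonpos_of_nonneg <;> linarith
    rw [h1, h2]
    have hIcc : Finset.Ioc 0 k = Finset.Icc 1 k := rfl
    rw [hIcc, ← Finset.sum_div, Finset.sum_sub_distrib, Finset.sum_const, Nat.card_Icc,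
      Nat.add_sub_cancel, nsmul_eq_mul, ← hS]
    field_simp
    linarith [h2α]
end

section
/- Let f(W) = ‖H Xᵀ W − H F‖_F² + λ‖W‖_{2,1} + θ·Tr(Wᵀ X L_s Xᵀ W) and g(W, D) = ‖H Xᵀ W − H F‖_F² + λ·Tr(Wᵀ D W) + θ·Tr(Wᵀ X L_s Xᵀ W). Suppose D^{(t)} has diagonal entries 1/(2‖w^{(t)}_{i·}‖₂), all rows of W^{(t)} and W^{(t+1)} are nonzero, and g(W^{(t+1)}, D^{(t)}) ≤ g(W^{(t)}, D^{(t)}). Then f(W^{(t+1)}) ≤ f(W^{(t)}). -/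
open Matrix in
lemma trace_diag_quad {d c : ℕ} (v : Fin d → ℝ) (W : Matrix (Fin d) (Fin c) ℝ) :
    (Wᵀ * Matrix.diagonal v * W).trace = ∑ i, v i * ∑ j, (W i j) ^ 2 := by
  rw [Matrix.trace]
  simp only [Matrix.diag, Matrix.mul_apply, Matrix.transpose_apply,
    Matrix.diagonal_apply]
  rw [Finset.sum_comm]
  refine Finset.sum_congr rfl fun i _ => ?_
  rw [Finset.mul_sum]
  refine Finset.sum_congr rfl fun k _ => ?_
  simp only [mul_ite, mul_zero]
  rw [Finset.sum_ite_eq' Finset.univ i (fun x => W x k * v x)]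
  simp [pow_two]; ring

open Matrix in
theorem stmt_12 (d n c : ℕ)
    (X : Matrix (Fin d) (Fin n) ℝ) (F : Matrix (Fin n) (Fin c) ℝ)
    (H Ls : Matrix (Fin n) (Fin n) ℝ)
    (hH : H = 1 - (n : ℝ)⁻¹ • Matrix.of (fun _ _ => (1 : ℝ)))
    (hLs : Ls.PosSemidef)
    (lam θ : ℝ) (hlam : 0 < lam) (hθ : 0 < θ)
    (f : Matrix (Fin d) (Fin c) ℝ → ℝ)
    (hf : ∀ W, f W =
      ((H * Xᵀ * W - H * F)ᵀ * (H * Xᵀ * W - H * F)).trace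
        + lam * ∑ i, Real.sqrt (∑ j, (W i j) ^ 2)
        + θ * (Wᵀ * X * Ls * Xᵀ * W).trace)
    (g : Matrix (Fin d) (Fin c) ℝ → Matrix (Fin d) (Fin d) ℝ → ℝ)
    (hg : ∀ W D, g W D =
      ((H * Xᵀ * W - H * F)ᵀ * (H * Xᵀ * W - H * F)).trace
        + lam * (Wᵀ * D * W).trace
        + θ * (Wᵀ * X * Ls * Xᵀ * W).trace)
    (W0 W1 : Matrix (Fin d) (Fin c) ℝ)
    (hW0 : ∀ i, W0 i ≠ 0) (hW1 : ∀ i, W1 i ≠ 0)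
    (D0 : Matrix (Fin d) (Fin d) ℝ)
    (hD0 : D0 = Matrix.diagonal (fun i => 1 / (2 * Real.sqrt (∑ j, (W0 i j) ^ 2))))
    (hdec : g W1 D0 ≤ g W0 D0) :
    f W1 ≤ f W0 := by
  set s0 : Fin d → ℝ := fun i => ∑ j, (W0 i j) ^ 2 with hs0
  set s1 : Fin d → ℝ := fun i => ∑ j, (W1 i j) ^ 2 with hs1
  have hs0pos : ∀ i, 0 < s0 i := by
    intro i
    have h1 : 0 ≤ s0 i := Finset.sum_nonneg fun j _ => sq_nonneg _
    rcases h1.lt_or_eq with h | h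
    · exact h
    · exfalso; apply hW0 i; funext j
      have := (Finset.sum_eq_zero_iff_of_nonneg (fun j _ => sq_nonneg (W0 i j))).mp h.symm j (Finset.mem_univ j)
      exact pow_eq_zero_iff (by norm_num) |>.mp this
  have hs1nn : ∀ i, 0 ≤ s1 i := fun i => Finset.sum_nonneg fun j _ => sq_nonneg _
  have hsqrt0 : ∀ i, 0 < Real.sqrt (s0 i) := fun i => Real.sqrt_pos.mpr (hs0pos i)
  -- key relationship: f W = g W D0 + lam * (∑ sqrt(s W) - ∑ s W/(2 sqrt(s0)))
  have htr : ∀ W : Matrix (Fin d) (Fin c) ℝ, (Wᵀ * D0 * W).trace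
      = ∑ i, (1 / (2 * Real.sqrt (s0 i))) * ∑ j, (W i j) ^ 2 := by
    intro W; rw [hD0, trace_diag_quad]
  -- per-row inequality
  have key : ∑ i, Real.sqrt (s1 i) - ∑ i, (1 / (2 * Real.sqrt (s0 i))) * s1 i
      ≤ ∑ i, Real.sqrt (s0 i) - ∑ i, (1 / (2 * Real.sqrt (s0 i))) * s0 i := by
    rw [← Finset.sum_sub_distrib, ← Finset.sum_sub_distrib]
    refine Finset.sum_le_sum fun i _ => ?_
    set a := Real.sqrt (s1 i)
    set b := Real.sqrt (s0 i)
    have hb : 0 < b := hsqrt0 i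
    have ha2 : a ^ 2 = s1 i := Real.sq_sqrt (hs1nn i)
    have hb2 : b ^ 2 = s0 i := Real.sq_sqrt (hs0pos i).le
    rw [← ha2, ← hb2]
    have hsq : 0 ≤ (a - b) ^ 2 := sq_nonneg _
    rw [div_mul_eq_mul_div, div_mul_eq_mul_div, one_mul, one_mul,
      sub_div' (by positivity), sub_div' (by positivity),
      div_le_div_iff₀ (by positivity) (by positivity)]
    nlinarith
  have h1 : f W1 = g W1 D0 + lam * (∑ i, Real.sqrt (s1 i) - ∑ i, (1 / (2 * Real.sqrt (s0 i))) * s1 i) := by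
    rw [hf, hg, htr]; ring
  have h0 : f W0 = g W0 D0 + lam * (∑ i, Real.sqrt (s0 i) - ∑ i, (1 / (2 * Real.sqrt (s0 i))) * s0 i) := by
    rw [hf, hg, htr]; ring
  rw [h1, h0]
  have := mul_le_mul_of_nonneg_left key hlam.le
  linarith
end
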